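/- Fix ε > 0, ε_g ∈ ℝ, integers k ≥ m ≥ 0, and ℓ with 0 ≤ ℓ ≤ k + m. With q_t := (1 − e^{t−ε})/(1 − e^{−ε}), k' := k − m, α_{i,j} := C(k',i)·C(m,j)·q_{2ε,ε}^{m−j}(1 − q_{2ε,ε})^j (and α_{i,j} = 0 outside the valid index ranges), define F_ℓ(t) := ∑_{n=0}^{ℓ} (1 − e^{ε_g − ε(m−n) − t k'}) · ∑_{i+2j=n} α_{i,j} q_t^{k'−i} (1 − q_t)^i. Then the derivative of F_ℓ with respect to t ∈ (0, ε) equals (1/(1 − e^{−ε})) · (e^{ε_g − ε(m−ℓ) − t k'} − e^{t−ε}) · ∑_{i+2j=ℓ} α_{i,j} (k' − i) q_t^{k'−i−1} (1 − q_t)^i. -/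

import Mathlib

open Real

noncomputable def qT (ε t : ℝ) : ℝ := (1 - exp (t - ε)) / (1 - exp (-ε))

noncomputable def qEE (ε : ℝ) : ℝ := (1 - exp (-ε)) / (1 - exp (-2 * ε))

noncomputable def alphaCoef (k' m : ℕ) (ε : ℝ) (i j : ℕ) : ℝ :=
  if i ≤ k' ∧ j ≤ m then
    (k'.choose i : ℝ) * (m.choose j : ℝ) * qEE ε ^ (m - j) * (1 - qEE ε) ^ j
  else 0

noncomputable def Fell (k' m : ℕ) (ε εg : ℝ) (ℓ : ℕ) (t : ℝ) : ℝ :=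
  ∑ n ∈ Finset.range (ℓ + 1),
    (1 - exp (εg - ε * ((m : ℝ) - (n : ℝ)) - t * (k' : ℝ))) *
      ∑ p ∈ Finset.range (k' + 1) ×ˢ Finset.range (m + 1),
        if p.1 + 2 * p.2 = n then
          alphaCoef k' m ε p.1 p.2 * qT ε t ^ (k' - p.1) * (1 - qT ε t) ^ p.1
        else 0

noncomputable def Ssum (k' m : ℕ) (ε : ℝ) (n : ℕ) (t : ℝ) : ℝ :=
  ∑ p ∈ Finset.range (k' + 1) ×ˢ Finset.range (m + 1),
    if p.1 + 2 * p.2 = n then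
      alphaCoef k' m ε p.1 p.2 * qT ε t ^ (k' - p.1) * (1 - qT ε t) ^ p.1
    else 0

noncomputable def Dsum (k' m : ℕ) (ε : ℝ) (n : ℕ) (t : ℝ) : ℝ :=
  ∑ p ∈ Finset.range (k' + 1) ×ˢ Finset.range (m + 1),
    if p.1 + 2 * p.2 = n then
      alphaCoef k' m ε p.1 p.2 * ((k' : ℝ) - (p.1 : ℝ)) * qT ε t ^ (k' - p.1 - 1) *
        (1 - qT ε t) ^ p.1
    else 0

noncomputable def Usum (k' m : ℕ) (ε : ℝ) (n : ℕ) (t : ℝ) : ℝ :=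
  ∑ p ∈ Finset.range (k' + 1) ×ˢ Finset.range (m + 1),
    if p.1 + 2 * p.2 = n then
      alphaCoef k' m ε p.1 p.2 * (p.1 : ℝ) * qT ε t ^ (k' - p.1) *
        (1 - qT ε t) ^ (p.1 - 1)
    else 0

lemma hasDerivAt_qT (ε t : ℝ) :
    HasDerivAt (qT ε) (-(exp (t - ε) / (1 - exp (-ε)))) t := by
  have h0 : HasDerivAt (fun s : ℝ => s - ε) 1 t := (hasDerivAt_id t).sub_const ε
  have h1 : HasDerivAt (fun s : ℝ => exp (s - ε)) (exp (t - ε)) t := by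
    simpa using h0.exp
  have h2 : HasDerivAt (fun s : ℝ => 1 - exp (s - ε)) (-exp (t - ε)) t := h1.const_sub 1
  have h3 := h2.div_const (1 - exp (-ε))
  rw [neg_div] at h3
  exact h3

lemma hasDerivAt_Ssum (k' m : ℕ) (ε : ℝ) (n : ℕ) (t : ℝ) :
    HasDerivAt (fun s => Ssum k' m ε n s)
      (-(exp (t - ε) / (1 - exp (-ε))) * (Dsum k' m ε n t - Usum k' m ε n t)) t := by
  have hq := hasDerivAt_qT ε t
  set qd := -(exp (t - ε) / (1 - exp (-ε))) with hqd
  have hsum : HasDerivAt (fun s => Ssum k' m ε n s)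
      (∑ p ∈ Finset.range (k' + 1) ×ˢ Finset.range (m + 1),
        if p.1 + 2 * p.2 = n then
          qd * (alphaCoef k' m ε p.1 p.2 * ((k' : ℝ) - (p.1 : ℝ)) * qT ε t ^ (k' - p.1 - 1) *
              (1 - qT ε t) ^ p.1
            - alphaCoef k' m ε p.1 p.2 * (p.1 : ℝ) * qT ε t ^ (k' - p.1) *
              (1 - qT ε t) ^ (p.1 - 1))
        else 0) t := by
    unfold Ssum
    apply HasDerivAt.fun_sum
    intro p hp
    simp only [Finset.mem_product, Finset.mem_range] at hp
    by_cases hc : p.1 + 2 * p.2 = n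
    · simp only [if_pos hc]
      have ha := (hq.pow (k' - p.1)).const_mul (alphaCoef k' m ε p.1 p.2)
      have hb := (hq.const_sub 1).pow p.1
      have hmul := ha.mul hb
      refine hmul.congr_deriv (Eq.symm ?_)
      have hcast : ((k' - p.1 : ℕ) : ℝ) = (k' : ℝ) - (p.1 : ℝ) :=
        Nat.cast_sub (by omega)
      rw [hcast, Pi.pow_apply, Pi.pow_apply]
      ring
    · simp only [if_neg hc]
      exact hasDerivAt_const t 0
  have heq : (∑ p ∈ Finset.range (k' + 1) ×ˢ Finset.range (m + 1),
        if p.1 + 2 * p.2 = n then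
          qd * (alphaCoef k' m ε p.1 p.2 * ((k' : ℝ) - (p.1 : ℝ)) * qT ε t ^ (k' - p.1 - 1) *
              (1 - qT ε t) ^ p.1
            - alphaCoef k' m ε p.1 p.2 * (p.1 : ℝ) * qT ε t ^ (k' - p.1) *
              (1 - qT ε t) ^ (p.1 - 1))
        else 0)
      = qd * (Dsum k' m ε n t - Usum k' m ε n t) := by
    rw [Dsum, Usum, ← Finset.sum_sub_distrib, Finset.mul_sum]
    refine Finset.sum_congr rfl fun p _ => ?_
    split_ifs with h
    · ring
    · simp
  rw [heq] at hsum
  exact hsum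

lemma term_deriv (k' m : ℕ) (ε εg : ℝ) (n : ℕ) (t : ℝ) :
    HasDerivAt
      (fun s => (1 - exp (εg - ε * ((m : ℝ) - (n : ℝ)) - s * (k' : ℝ))) * Ssum k' m ε n s)
      ((k' : ℝ) * exp (εg - ε * ((m : ℝ) - (n : ℝ)) - t * (k' : ℝ)) * Ssum k' m ε n t
        + (1 - exp (εg - ε * ((m : ℝ) - (n : ℝ)) - t * (k' : ℝ))) *
          (-(exp (t - ε) / (1 - exp (-ε))) * (Dsum k' m ε n t - Usum k' m ε n t))) t := by
  have hlin : HasDerivAt (fun s : ℝ => εg - ε * ((m : ℝ) - (n : ℝ)) - s * (k' : ℝ))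
      (-(k' : ℝ)) t := by
    simpa using ((hasDerivAt_id t).mul_const ((k' : ℝ))).const_sub (εg - ε * ((m : ℝ) - (n : ℝ)))
  have hE := hlin.exp
  have h := (hE.const_sub 1).mul (hasDerivAt_Ssum k' m ε n t)
  refine h.congr_deriv (Eq.symm ?_)
  ring

lemma idB (k' m : ℕ) (ε : ℝ) (n : ℕ) (t : ℝ) :
    (k' : ℝ) * Ssum k' m ε n t
      = qT ε t * Dsum k' m ε n t + (1 - qT ε t) * Usum k' m ε n t := by
  rw [Ssum, Dsum, Usum, Finset.mul_sum, Finset.mul_sum, Finset.mul_sum,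
    ← Finset.sum_add_distrib]
  refine Finset.sum_congr rfl fun p hp => ?_
  simp only [Finset.mem_product, Finset.mem_range] at hp
  have hp1 : p.1 ≤ k' := by omega
  split_ifs with h
  · set q := qT ε t
    set α := alphaCoef k' m ε p.1 p.2
    have h1 : ((k' : ℝ) - (p.1 : ℝ)) * q ^ (k' - p.1)
        = ((k' : ℝ) - (p.1 : ℝ)) * q ^ (k' - p.1 - 1) * q := by
      rcases lt_or_eq_of_le hp1 with hlt | heq
      · have e1 : q ^ (k' - p.1) = q ^ (k' - p.1 - 1) * q := by
          rw [← pow_succ]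
          congr 1
          omega
        rw [e1]; ring
      · rw [heq]; simp
    have h2 : (p.1 : ℝ) * (1 - q) ^ p.1
        = (p.1 : ℝ) * (1 - q) ^ (p.1 - 1) * (1 - q) := by
      rcases Nat.eq_zero_or_pos p.1 with h0 | h0
      · simp [h0]
      · have e2 : (1 - q) ^ p.1 = (1 - q) ^ (p.1 - 1) * (1 - q) := by
          rw [← pow_succ]
          congr 1
          omega
        rw [e2]; ring
    linear_combination (α * (1 - q) ^ p.1) * h1 + (α * q ^ (k' - p.1)) * h2
  · ring

lemma shiftSum (f g : ℕ → ℝ) (K : ℕ) (hf0 : f 0 = 0) (hgK : g K = 0)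
    (h : ∀ i < K, f (i + 1) = g i) :
    ∑ i ∈ Finset.range (K + 1), f i = ∑ i ∈ Finset.range (K + 1), g i := by
  rw [Finset.sum_range_succ' f K, Finset.sum_range_succ g K, hf0, hgK, add_zero, add_zero]
  exact Finset.sum_congr rfl fun i hi => h i (Finset.mem_range.mp hi)

lemma idA (k' m : ℕ) (ε : ℝ) (n : ℕ) (t : ℝ) :
    Usum k' m ε (n + 1) t = Dsum k' m ε n t := by
  rw [Usum, Dsum, Finset.sum_product, Finset.sum_product]
  refine shiftSum _ _ k' ?_ ?_ ?_
  · refine Finset.sum_eq_zero fun j _ => ?_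
    split_ifs with h <;> simp
  · refine Finset.sum_eq_zero fun j _ => ?_
    split_ifs with h <;> simp
  · intro i hi
    refine Finset.sum_congr rfl fun j hj => ?_
    simp only [Finset.mem_range] at hj
    show (if i + 1 + 2 * j = n + 1 then
        alphaCoef k' m ε (i + 1) j * ((i + 1 : ℕ) : ℝ) * qT ε t ^ (k' - (i + 1)) *
          (1 - qT ε t) ^ (i + 1 - 1)
      else 0)
      = (if i + 2 * j = n then
        alphaCoef k' m ε i j * ((k' : ℝ) - (i : ℝ)) * qT ε t ^ (k' - i - 1) *
          (1 - qT ε t) ^ i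
      else 0)
    by_cases h : i + 2 * j = n
    · rw [if_pos (show i + 1 + 2 * j = n + 1 by omega), if_pos h]
      have hα1 : alphaCoef k' m ε (i + 1) j
          = (k'.choose (i + 1) : ℝ) * (m.choose j : ℝ) * qEE ε ^ (m - j) * (1 - qEE ε) ^ j := by
        rw [alphaCoef, if_pos ⟨by omega, by omega⟩]
      have hα2 : alphaCoef k' m ε i j
          = (k'.choose i : ℝ) * (m.choose j : ℝ) * qEE ε ^ (m - j) * (1 - qEE ε) ^ j := by
        rw [alphaCoef, if_pos ⟨by omega, by omega⟩]
      have key : (k'.choose (i + 1) : ℝ) * ((i + 1 : ℕ) : ℝ)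
          = (k'.choose i : ℝ) * ((k' : ℝ) - (i : ℝ)) := by
        have hnat := Nat.choose_succ_right_eq k' i
        have hcast : ((k' - i : ℕ) : ℝ) = (k' : ℝ) - (i : ℝ) := Nat.cast_sub (by omega)
        rw [← hcast]
        exact_mod_cast congrArg (Nat.cast : ℕ → ℝ) hnat
      have he1 : k' - (i + 1) = k' - i - 1 := by omega
      have he2 : i + 1 - 1 = i := rfl
      rw [hα1, hα2, he1, he2]
      linear_combination ((m.choose j : ℝ) * qEE ε ^ (m - j) * (1 - qEE ε) ^ j *
        qT ε t ^ (k' - i - 1) * (1 - qT ε t) ^ i) * key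
    · rw [if_neg (show ¬ i + 1 + 2 * j = n + 1 by omega), if_neg h]

lemma Usum_zero (k' m : ℕ) (ε : ℝ) (t : ℝ) : Usum k' m ε 0 t = 0 := by
  rw [Usum]
  refine Finset.sum_eq_zero fun p _ => ?_
  split_ifs with h
  · have h0 : p.1 = 0 := by omega
    simp [h0]
  · rfl

lemma Fell_zero (k' m : ℕ) (ε εg : ℝ) :
    Fell k' m ε εg 0 = fun s =>
      (1 - exp (εg - ε * ((m : ℝ) - ((0 : ℕ) : ℝ)) - s * (k' : ℝ))) * Ssum k' m ε 0 s := by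
  funext s
  rw [Fell, Finset.sum_range_one]
  rfl

lemma Fell_succ (k' m : ℕ) (ε εg : ℝ) (n : ℕ) :
    Fell k' m ε εg (n + 1) = fun s => Fell k' m ε εg n s +
      (1 - exp (εg - ε * ((m : ℝ) - ((n + 1 : ℕ) : ℝ)) - s * (k' : ℝ))) *
        Ssum k' m ε (n + 1) s := by
  funext s
  rw [Fell, Finset.sum_range_succ]
  rfl

theorem aux_main (ε εg : ℝ) (hε : 0 < ε) (k' m : ℕ) (ℓ : ℕ) (t : ℝ) :
    HasDerivAt (Fell k' m ε εg ℓ)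
      ((1 / (1 - exp (-ε))) *
        (exp (εg - ε * ((m : ℝ) - (ℓ : ℝ)) - t * (k' : ℝ)) - exp (t - ε)) *
        Dsum k' m ε ℓ t) t := by
  have hz1 : exp (-ε) < 1 := by
    rw [exp_lt_one_iff]
    linarith
  have hBne : (1 : ℝ) - exp (-ε) ≠ 0 := ne_of_gt (by linarith)
  have hB : (1 - exp (-ε)) * (1 / (1 - exp (-ε))) = 1 := mul_one_div_cancel hBne
  induction ℓ with
  | zero =>
    rw [Fell_zero]
    have hd := term_deriv k' m ε εg 0 t
    convert hd using 1
    have hkS := idB k' m ε 0 t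
    rw [Usum_zero, mul_zero, add_zero] at hkS
    rw [Usum_zero, sub_zero]
    simp only [qT] at hkS ⊢
    push_cast
    linear_combination (-exp (εg - ε * ((m : ℝ) - 0) - t * (k' : ℝ))) * hkS
  | succ n ih =>
    rw [Fell_succ]
    have hd := term_deriv k' m ε εg (n + 1) t
    have h := ih.add hd
    refine h.congr_deriv (Eq.symm ?_)
    have hkS := idB k' m ε (n + 1) t
    rw [idA] at hkS hd ⊢
    have hEE : exp (εg - ε * ((m : ℝ) - (n : ℝ)) - t * (k' : ℝ))
        = exp (εg - ε * ((m : ℝ) - ((n + 1 : ℕ) : ℝ)) - t * (k' : ℝ)) * exp (-ε) := by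
      rw [← exp_add]
      congr 1
      push_cast
      ring
    rw [hEE] at ih ⊢
    simp only [qT] at hkS ⊢
    push_cast at hkS ⊢
    linear_combination (-exp (εg - ε * ((m : ℝ) - ((n : ℝ) + 1)) - t * (k' : ℝ))) * hkS
      + (exp (εg - ε * ((m : ℝ) - ((n : ℝ) + 1)) - t * (k' : ℝ)) * Dsum k' m ε n t) * hB

theorem stmt_8 (ε εg : ℝ) (hε : 0 < ε) (k m : ℕ) (hmk : m ≤ k)
    (ℓ : ℕ) (hℓ : ℓ ≤ k + m) (t : ℝ) (ht : t ∈ Set.Ioo 0 ε) :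
    HasDerivAt (Fell (k - m) m ε εg ℓ)
      ((1 / (1 - exp (-ε))) *
        (exp (εg - ε * ((m : ℝ) - (ℓ : ℝ)) - t * ((k - m : ℕ) : ℝ)) - exp (t - ε)) *
        ∑ p ∈ Finset.range (k - m + 1) ×ˢ Finset.range (m + 1),
          if p.1 + 2 * p.2 = ℓ then
            alphaCoef (k - m) m ε p.1 p.2 * (((k - m : ℕ) : ℝ) - (p.1 : ℝ)) *
              qT ε t ^ (k - m - p.1 - 1) * (1 - qT ε t) ^ p.1
          else 0) t := by
  exact aux_main ε εg hε (k - m) m ℓ t
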